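/- Let k ≥ 3 be a positive integer. Then there is a constant c₁ = c₁(k) > 0 such that for every large enough n the following holds: if n^{-2/(k+1)} ≤ p ≤ 4·n^{-2/(k+1)}, then the probability that a random graph G ~ G(T_{n,k}, p) contains no good copy of K_k is at most exp(−c₁·n²·p). -/

import Mathlib

namespace TournamentGame

variable {V : Type*} [DecidableEq V]

/-- The underlying undirected edges of a set of oriented edges. -/
def undirect (M : Finset (V × V)) : Finset (Sym2 V) :=
  M.image fun p => s(p.1, p.2)

/-- `MakerWin X F b M B` : in the (1:b) Maker-Breaker game on board `X`, with Maker
having claimed `M`, Breaker having claimed `B`, and Maker to move, Maker has a strategy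
to claim all edges of some winning set (i.e. reach a position with `F` on her edges). -/
inductive MakerWin (X : Finset (Sym2 V)) (F : Finset (Sym2 V) → Prop) (b : ℕ) :
    Finset (Sym2 V) → Finset (Sym2 V) → Prop
  | win (M B : Finset (Sym2 V)) : F M → MakerWin X F b M B
  | move (M B : Finset (Sym2 V)) (e : Sym2 V) (heX : e ∈ X) (hefree : e ∉ M ∪ B)
      (h : ∀ B' : Finset (Sym2 V), B' ⊆ X \ (insert e M ∪ B) →
        B'.card = min b (X \ (insert e M ∪ B)).card →
        MakerWin X F b (insert e M) (B ∪ B')) :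
      MakerWin X F b M B

/-- `BreakerBlock X F b M B` : Maker to move; Breaker has a strategy ensuring that `F`
never holds on Maker's edge set. -/
inductive BreakerBlock (X : Finset (Sym2 V)) (F : Finset (Sym2 V) → Prop) (b : ℕ) :
    Finset (Sym2 V) → Finset (Sym2 V) → Prop
  | step (M B : Finset (Sym2 V)) (hF : ¬ F M) (resp : Sym2 V → Finset (Sym2 V))
      (hsub : ∀ e ∈ X, e ∉ M ∪ B → resp e ⊆ X \ (insert e M ∪ B))
      (hcard : ∀ e ∈ X, e ∉ M ∪ B → (resp e).card = min b (X \ (insert e M ∪ B)).card)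
      (h : ∀ e ∈ X, e ∉ M ∪ B → BreakerBlock X F b (insert e M) (B ∪ resp e)) :
      BreakerBlock X F b M B

/-- Oriented (tournament-game) version of `MakerWin`: Maker claims an edge together with
an orientation; her position is a set of oriented edges. -/
inductive OMakerWin (X : Finset (Sym2 V)) (F : Finset (V × V) → Prop) (b : ℕ) :
    Finset (V × V) → Finset (Sym2 V) → Prop
  | win (M : Finset (V × V)) (B : Finset (Sym2 V)) : F M → OMakerWin X F b M B
  | move (M : Finset (V × V)) (B : Finset (Sym2 V)) (x y : V)
      (heX : s(x, y) ∈ X) (hefree : s(x, y) ∉ undirect M ∪ B)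
      (h : ∀ B' : Finset (Sym2 V), B' ⊆ X \ (insert s(x, y) (undirect M) ∪ B) →
        B'.card = min b (X \ (insert s(x, y) (undirect M) ∪ B)).card →
        OMakerWin X F b (insert (x, y) M) (B ∪ B')) :
      OMakerWin X F b M B

/-- Oriented version of `BreakerBlock`. -/
inductive OBreakerBlock (X : Finset (Sym2 V)) (F : Finset (V × V) → Prop) (b : ℕ) :
    Finset (V × V) → Finset (Sym2 V) → Prop
  | step (M : Finset (V × V)) (B : Finset (Sym2 V)) (hF : ¬ F M)
      (resp : V → V → Finset (Sym2 V))
      (hsub : ∀ x y : V, s(x, y) ∈ X → s(x, y) ∉ undirect M ∪ B →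
        resp x y ⊆ X \ (insert s(x, y) (undirect M) ∪ B))
      (hcard : ∀ x y : V, s(x, y) ∈ X → s(x, y) ∉ undirect M ∪ B →
        (resp x y).card = min b (X \ (insert s(x, y) (undirect M) ∪ B)).card)
      (h : ∀ x y : V, s(x, y) ∈ X → s(x, y) ∉ undirect M ∪ B →
        OBreakerBlock X F b (insert (x, y) M) (B ∪ resp x y)) :
      OBreakerBlock X F b M B

/-- Position with Breaker to move, in the unoriented game: Breaker can respond and
then keep blocking forever. -/
def BreakerTurn (X : Finset (Sym2 V)) (F : Finset (Sym2 V) → Prop) (b : ℕ)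
    (M B : Finset (Sym2 V)) : Prop :=
  ¬ F M ∧ ∃ B' : Finset (Sym2 V), B' ⊆ X \ (M ∪ B) ∧
    B'.card = min b (X \ (M ∪ B)).card ∧ BreakerBlock X F b M (B ∪ B')

/-- Position with Breaker to move, in the oriented game. -/
def OBreakerTurn (X : Finset (Sym2 V)) (F : Finset (V × V) → Prop) (b : ℕ)
    (M : Finset (V × V)) (B : Finset (Sym2 V)) : Prop :=
  ¬ F M ∧ ∃ B' : Finset (Sym2 V), B' ⊆ X \ (undirect M ∪ B) ∧
    B'.card = min b (X \ (undirect M ∪ B)).card ∧ OBreakerBlock X F b M (B ∪ B')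

/-- Winning sets of the triangle game. -/
def HasTriangle (M : Finset (Sym2 V)) : Prop :=
  ∃ x y z : V, x ≠ y ∧ y ≠ z ∧ x ≠ z ∧ s(x, y) ∈ M ∧ s(y, z) ∈ M ∧ s(x, z) ∈ M

/-- Maker's oriented edges contain a cyclic (directed) triangle. -/
def HasCyclicTriangle (M : Finset (V × V)) : Prop :=
  ∃ x y z : V, x ≠ y ∧ y ≠ z ∧ x ≠ z ∧ (x, y) ∈ M ∧ (y, z) ∈ M ∧ (z, x) ∈ M

/-- Maker's oriented edges contain an acyclic (transitive) triangle. -/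
def HasAcyclicTriangle (M : Finset (V × V)) : Prop :=
  ∃ x y z : V, x ≠ y ∧ y ≠ z ∧ x ≠ z ∧ (x, y) ∈ M ∧ (y, z) ∈ M ∧ (x, z) ∈ M

/-- A tournament on `Fin k`, given by its arc relation. -/
def IsTournament {k : ℕ} (T : Fin k → Fin k → Prop) : Prop :=
  (∀ i, ¬ T i i) ∧ ∀ i j : Fin k, i ≠ j → (T i j ↔ ¬ T j i)

/-- Maker's oriented edges contain a copy of the tournament `T`. -/
def HasTCopy {k : ℕ} (T : Fin k → Fin k → Prop) (M : Finset (V × V)) : Prop :=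
  ∃ f : Fin k → V, Function.Injective f ∧ ∀ i j : Fin k, T i j → (f i, f j) ∈ M

/-- The edge set of the complete graph `K_n`. -/
def completeEdges (n : ℕ) : Finset (Sym2 (Fin n)) :=
  Finset.univ.filter fun e => ¬ e.IsDiag

/-- The edge set of the Turán graph `T_{n,k}` : classes are residues mod `k`. -/
def turanEdges (n k : ℕ) : Finset (Sym2 (Fin n)) :=
  Finset.univ.filter fun e => ¬ (e.map fun v : Fin n => v.val % k).IsDiag

/-- `A` contains a good copy of `K_k` (all vertices in distinct classes of `T_{n,k}`). -/
def GoodCopy (n k : ℕ) (A : Finset (Sym2 (Fin n))) : Prop :=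
  ∃ f : Fin k → Fin n, Function.Injective f ∧
    (∀ i j : Fin k, i ≠ j → (f i).val % k ≠ (f j).val % k) ∧
    (∀ i j : Fin k, i ≠ j → s(f i, f j) ∈ A)

open Classical in
/-- Probability that a `p`-random subset `A` of `E` (each element kept independently with
probability `p`) satisfies `P`. This is the model `G(E, p)`. -/
noncomputable def edgeProb {α : Type*} [DecidableEq α] (E : Finset α) (p : ℝ)
    (P : Finset α → Prop) : ℝ :=
  ∑ A ∈ E.powerset, if P A then p ^ A.card * (1 - p) ^ (E.card - A.card) else 0

open Classical in
/-- Probability that a uniformly random `M`-element subset of `E` satisfies `P`.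
This is the model `G(E, M)`. -/
noncomputable def uniformProb {α : Type*} [DecidableEq α] (E : Finset α) (M : ℕ)
    (P : Finset α → Prop) : ℝ :=
  ((E.powerset.filter fun A => A.card = M ∧ P A).card : ℝ) /
    ((E.powerset.filter fun A => A.card = M).card : ℝ)

/-- The three edges of a triangle on `x`, `y`, `z`. -/
def triEdges (x y z : V) : Finset (Sym2 V) := {s(x, y), s(y, z), s(x, z)}

/-- `x`, `y`, `z` form a triangle of the graph with edge set `A`. -/
def IsTriangleIn (A : Finset (Sym2 V)) (x y z : V) : Prop :=
  x ≠ y ∧ y ≠ z ∧ x ≠ z ∧ s(x, y) ∈ A ∧ s(y, z) ∈ A ∧ s(x, z) ∈ A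

/-- The triangles of `A`, each recorded as its set of three edges: the vertex set of `T_A`. -/
def TriSets (A : Finset (Sym2 V)) : Set (Finset (Sym2 V)) :=
  {t | ∃ x y z : V, IsTriangleIn A x y z ∧ t = triEdges x y z}

/-- `C` is a triangle collection: every edge lies in a triangle and the graph `T_C` of
triangles (adjacent iff sharing an edge) is connected. -/
def IsTriangleCollection (C : Finset (Sym2 V)) : Prop :=
  (∀ e ∈ C, ∃ x y z : V, IsTriangleIn C x y z ∧ e ∈ triEdges x y z) ∧
  ∀ t ∈ TriSets C, ∀ t' ∈ TriSets C,
    Relation.ReflTransGen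
      (fun a b => a ∈ TriSets C ∧ b ∈ TriSets C ∧ (a ∩ b).Nonempty) t t'

/-- Adjacency of `K₃⁺`: a triangle on `{0,1,2}` with a pendant edge `{2,3}`. -/
def K3plusAdj (a b : Fin 4) : Prop :=
  (a.val < 3 ∧ b.val < 3 ∧ a ≠ b) ∨ (a.val = 2 ∧ b.val = 3) ∨ (a.val = 3 ∧ b.val = 2)

/-- Adjacency of the path on `Fin m`. -/
def pathAdj {m : ℕ} (a b : Fin m) : Prop := a.val + 1 = b.val ∨ b.val + 1 = a.val

/-- `C` is very basic: `T_C` is (isomorphic to) a subgraph of `K₃⁺` or of a path `P_m`. -/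
def VeryBasic (C : Finset (Sym2 V)) : Prop :=
  (∃ φ : TriSets C → Fin 4, Function.Injective φ ∧
    ∀ t t' : TriSets C, t ≠ t' → ((t : Finset (Sym2 V)) ∩ (t' : Finset (Sym2 V))).Nonempty →
      K3plusAdj (φ t) (φ t')) ∨
  (∃ m : ℕ, ∃ φ : TriSets C → Fin m, Function.Injective φ ∧
    ∀ t t' : TriSets C, t ≠ t' → ((t : Finset (Sym2 V)) ∩ (t' : Finset (Sym2 V))).Nonempty →
      pathAdj (φ t) (φ t'))

/-- `C` is basic: there are distinct edges `e₁, e₂` with `C - eᵢ` very basic for both. -/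
def Basic (C : Finset (Sym2 V)) : Prop :=
  ∃ e₁ ∈ C, ∃ e₂ ∈ C, e₁ ≠ e₂ ∧ VeryBasic (C.erase e₁) ∧ VeryBasic (C.erase e₂)

open Classical in
/-- The set of non-isolated vertices of the graph with edge set `C`. -/
noncomputable def support [Fintype V] (C : Finset (Sym2 V)) : Finset V :=
  Finset.univ.filter fun v => ∃ e ∈ C, v ∈ e

open Classical in
/-- Degree of `v` in the graph with edge set `C`. -/
noncomputable def degreeIn (C : Finset (Sym2 V)) (v : V) : ℕ :=
  (C.filter fun e => v ∈ e).card

/-- The maximum density `m(C) = max_{H ⊆ C} e(H)/v(H)` is (strictly) less than `r`. -/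
def MaxDensityLt [Fintype V] (C : Finset (Sym2 V)) (r : ℝ) : Prop :=
  ∀ D ⊆ C, D.Nonempty → (D.card : ℝ) / ((support D).card : ℝ) < r

/-- The edge set of the `k`-wheel: a cycle on `{0, …, k-1} ⊆ Fin (k+1)` together with
all edges to the center, the vertex `k`. -/
def wheelEdges (k : ℕ) : Finset (Sym2 (Fin (k + 1))) :=
  ((Finset.univ : Finset (Fin k)).image fun i =>
    s((⟨i.val, by have := i.2; omega⟩ : Fin (k + 1)),
      (⟨(i.val + 1) % k, by have := i.2; exact Nat.lt_succ_of_lt (Nat.mod_lt _ (by omega))⟩ :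
        Fin (k + 1)))) ∪
  ((Finset.univ : Finset (Fin k)).image fun i =>
    s((⟨i.val, by have := i.2; omega⟩ : Fin (k + 1)), (Fin.last k)))

variable {α : Type*} [DecidableEq α]

/-- Increasing predicate. -/
def Inc (P : Finset α → Prop) : Prop := ∀ ⦃A B : Finset α⦄, A ⊆ B → P A → P B

/-- Decreasing predicate. -/
def Dec (P : Finset α → Prop) : Prop := ∀ ⦃A B : Finset α⦄, A ⊆ B → P B → P A

lemma edgeProb_congr {E : Finset α} {p : ℝ} {P Q : Finset α → Prop}
    (h : ∀ A ⊆ E, (P A ↔ Q A)) : edgeProb E p P = edgeProb E p Q := by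
  classical
  unfold edgeProb
  refine Finset.sum_congr rfl fun A hA => ?_
  rw [Finset.mem_powerset] at hA
  by_cases hP : P A
  · rw [if_pos hP, if_pos ((h A hA).1 hP)]
  · rw [if_neg hP, if_neg (fun hQ => hP ((h A hA).2 hQ))]

lemma edgeProb_nonneg {E : Finset α} {p : ℝ} (hp0 : 0 ≤ p) (hp1 : p ≤ 1)
    (P : Finset α → Prop) : 0 ≤ edgeProb E p P := by
  classical
  unfold edgeProb
  refine Finset.sum_nonneg fun A _ => ?_
  split
  · exact mul_nonneg (pow_nonneg hp0 _) (pow_nonneg (by linarith) _)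
  · exact le_refl 0

lemma edgeProb_mono {E : Finset α} {p : ℝ} (hp0 : 0 ≤ p) (hp1 : p ≤ 1)
    {P Q : Finset α → Prop} (h : ∀ A ⊆ E, P A → Q A) :
    edgeProb E p P ≤ edgeProb E p Q := by
  classical
  unfold edgeProb
  refine Finset.sum_le_sum fun A hA => ?_
  rw [Finset.mem_powerset] at hA
  by_cases hP : P A
  · rw [if_pos hP, if_pos (h A hA hP)]
  · rw [if_neg hP]
    split
    · exact mul_nonneg (pow_nonneg hp0 _) (pow_nonneg (by linarith) _)
    · exact le_refl 0

lemma edgeProb_insert {E : Finset α} {e : α} (he : e ∉ E) (p : ℝ) (P : Finset α → Prop) :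
    edgeProb (insert e E) p P
      = p * edgeProb E p (fun A => P (insert e A)) + (1 - p) * edgeProb E p P := by
  classical
  unfold edgeProb
  rw [Finset.powerset_insert, Finset.sum_union]
  · have h1 : ∑ A ∈ E.powerset,
        (if P A then p ^ A.card * (1 - p) ^ ((insert e E).card - A.card) else 0)
        = (1 - p) * ∑ A ∈ E.powerset,
            (if P A then p ^ A.card * (1 - p) ^ (E.card - A.card) else 0) := by
      rw [Finset.mul_sum]
      refine Finset.sum_congr rfl fun A hA => ?_
      rw [Finset.mem_powerset] at hA
      have hcard : (insert e E).card - A.card = (E.card - A.card) + 1 := by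
        rw [Finset.card_insert_of_notMem he]
        have := Finset.card_le_card hA
        omega
      rw [hcard, pow_succ]
      split <;> ring
    have h2 : ∑ A ∈ E.powerset.image (insert e),
        (if P A then p ^ A.card * (1 - p) ^ ((insert e E).card - A.card) else 0)
        = p * ∑ A ∈ E.powerset,
            (if P (insert e A) then p ^ A.card * (1 - p) ^ (E.card - A.card) else 0) := by
      rw [Finset.sum_image, Finset.mul_sum]
      · refine Finset.sum_congr rfl fun A hA => ?_
        rw [Finset.mem_powerset] at hA
        have heA : e ∉ A := fun h => he (hA h)
        have hc1 : (insert e A).card = A.card + 1 := Finset.card_insert_of_notMem heA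
        have hc2 : (insert e E).card - (A.card + 1) = E.card - A.card := by
          rw [Finset.card_insert_of_notMem he]
          omega
        rw [hc1, hc2, pow_succ]
        split <;> ring
      · intro A hA B hB hAB
        rw [Finset.mem_coe, Finset.mem_powerset] at hA hB
        have heA : e ∉ A := fun h => he (hA h)
        have heB : e ∉ B := fun h => he (hB h)
        have := congrArg (fun s => Finset.erase s e) hAB
        simpa [Finset.erase_insert heA, Finset.erase_insert heB] using this
    rw [h1, h2]
    ring
  · rw [Finset.disjoint_left]
    intro A hA hA2
    rw [Finset.mem_powerset] at hA
    rcases Finset.mem_image.1 hA2 with ⟨B, _, rfl⟩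
    exact he (hA (Finset.mem_insert_self e B))

lemma edgeProb_true (E : Finset α) {p : ℝ} :
    edgeProb E p (fun _ => True) = 1 := by
  classical
  induction E using Finset.induction_on with
  | empty => simp [edgeProb]
  | insert _ _ he ih => rw [edgeProb_insert he]; rw [ih]; ring

lemma edgeProb_split (E : Finset α) (p : ℝ) (P Q : Finset α → Prop) :
    edgeProb E p P
      = edgeProb E p (fun A => P A ∧ Q A) + edgeProb E p (fun A => P A ∧ ¬ Q A) := by
  classical
  unfold edgeProb
  rw [← Finset.sum_add_distrib]
  refine Finset.sum_congr rfl fun A _ => ?_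
  by_cases hP : P A <;> by_cases hQ : Q A <;> simp [hP, hQ]

lemma edgeProb_union_bound {E : Finset α} {p : ℝ} (hp0 : 0 ≤ p) (hp1 : p ≤ 1)
    {β : Type*} (l : List β) (R : β → Finset α → Prop) :
    edgeProb E p (fun A => ∃ j ∈ l, R j A)
      ≤ (l.map fun j => edgeProb E p (R j)).sum := by
  induction l with
  | nil =>
      have : edgeProb E p (fun A => ∃ j ∈ ([] : List β), R j A)
          = edgeProb E p (fun _ => False) := edgeProb_congr (by simp)
      simp [this, edgeProb]
  | cons j l ih =>
      have hsplit := edgeProb_split E p (fun A => ∃ j' ∈ (j :: l), R j' A) (R j)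
      rw [hsplit]
      simp only [List.map_cons, List.sum_cons]
      gcongr
      · exact edgeProb_mono hp0 hp1 (fun A _ h => h.2)
      · refine le_trans (edgeProb_mono hp0 hp1 (Q := fun A => ∃ j' ∈ l, R j' A) ?_) ih
        rintro A _ ⟨⟨j', hj', hR⟩, hnR⟩
        rcases List.mem_cons.1 hj' with rfl | hj'
        · exact absurd hR hnR
        · exact ⟨j', hj', hR⟩

/-- Independence of `S ⊆ A` from events not depending on `S`. -/
lemma edgeProb_indep {p : ℝ} :
    ∀ (E : Finset α), ∀ S ⊆ E, ∀ N : Finset α → Prop, (∀ A, N A ↔ N (A \ S)) →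
      edgeProb E p (fun A => S ⊆ A ∧ N A) = p ^ S.card * edgeProb E p N := by
  intro E
  induction E using Finset.induction_on with
  | empty =>
      intro S hS N hN
      rw [Finset.subset_empty] at hS
      subst hS
      simp only [Finset.card_empty, pow_zero, one_mul]
      exact edgeProb_congr (by simp)
  | @insert e E' he ih =>
      intro S hS N hN
      by_cases heS : e ∈ S
      · have hS' : S.erase e ⊆ E' := fun x hx => by
          have := hS (Finset.mem_of_mem_erase hx)
          rcases Finset.mem_insert.1 this with rfl | h
          · exact absurd rfl (Finset.ne_of_mem_erase hx)
          · exact h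
        have key : ∀ A : Finset α, (insert e A) \ S = A \ S := by
          intro A
          ext x
          simp only [Finset.mem_sdiff, Finset.mem_insert]
          constructor
          · rintro ⟨rfl | h, hx⟩
            · exact absurd heS hx
            · exact ⟨h, hx⟩
          · rintro ⟨h, hx⟩; exact ⟨Or.inr h, hx⟩
        have hN' : ∀ A, N (insert e A) ↔ N (insert e (A \ (S.erase e))) := by
          intro A
          rw [hN (insert e A), hN (insert e (A \ (S.erase e))), key A, key (A \ (S.erase e))]
          have : (A \ (S.erase e)) \ S = A \ S := by
            ext x
            simp only [Finset.mem_sdiff, Finset.mem_erase]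
            constructor
            · rintro ⟨⟨hx, _⟩, hxS⟩
              exact ⟨hx, hxS⟩
            · rintro ⟨hx, hxS⟩
              exact ⟨⟨hx, fun hc => hxS hc.2⟩, hxS⟩
          rw [this]
        rw [edgeProb_insert he]
        have e1 : edgeProb E' p (fun A => S ⊆ insert e A ∧ N (insert e A))
            = edgeProb E' p (fun A => S.erase e ⊆ A ∧ (fun B => N (insert e B)) A) := by
          refine edgeProb_congr fun A hA => ?_
          have heA : e ∉ A := fun h => he (hA h)
          constructor
          · rintro ⟨h1, h2⟩
            refine ⟨fun x hx => ?_, h2⟩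
            rcases Finset.mem_insert.1 (h1 (Finset.mem_of_mem_erase hx)) with rfl | h
            · exact absurd rfl (Finset.ne_of_mem_erase hx)
            · exact h
          · rintro ⟨h1, h2⟩
            refine ⟨fun x hx => ?_, h2⟩
            by_cases hxe : x = e
            · subst hxe; exact Finset.mem_insert_self _ _
            · exact Finset.mem_insert_of_mem (h1 (Finset.mem_erase.2 ⟨hxe, hx⟩))
        have e2 : edgeProb E' p (fun A => S ⊆ A ∧ N A) = 0 := by
          have : edgeProb E' p (fun A => S ⊆ A ∧ N A)
              = edgeProb E' p (fun _ => False) := by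
            refine edgeProb_congr fun A hA => ?_
            simp only [iff_false]
            rintro ⟨h1, _⟩
            exact he (hA (h1 heS))
          rw [this]
          have h0 := edgeProb_split E' p (fun _ => True) (fun _ => True)
          rw [edgeProb_true] at h0
          have : edgeProb E' p (fun A => True ∧ ¬True) = edgeProb E' p (fun _ => False) :=
            edgeProb_congr (by simp)
          rw [this] at h0
          have h1 : edgeProb E' p (fun A => True ∧ True) = 1 := by
            rw [edgeProb_congr (Q := fun _ => True) (by simp), edgeProb_true]
          linarith
        rw [e1, e2, ih (S.erase e) hS' _ (fun A => hN' A)]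
        have e3 : edgeProb E' p (fun B => N (insert e B)) = edgeProb E' p N := by
          refine edgeProb_congr fun A hA => ?_
          rw [hN (insert e A), key A, ← hN A]
        rw [e3]
        have e4 : edgeProb (insert e E') p N
            = p * edgeProb E' p (fun A => N (insert e A)) + (1 - p) * edgeProb E' p N :=
          edgeProb_insert he p N
        rw [e4, e3]
        have hcard : S.card = (S.erase e).card + 1 := by
          rw [Finset.card_erase_of_mem heS]
          have : 0 < S.card := Finset.card_pos.2 ⟨e, heS⟩
          omega
        rw [hcard, pow_succ]
        ring
      · -- e ∉ S
        have hS' : S ⊆ E' := fun x hx => by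
          rcases Finset.mem_insert.1 (hS hx) with rfl | h
          · exact absurd hx heS
          · exact h
        have key : ∀ A : Finset α, (insert e A) \ S = insert e (A \ S) := by
          intro A
          ext x
          simp only [Finset.mem_sdiff, Finset.mem_insert]
          constructor
          · rintro ⟨rfl | h, hx⟩
            · exact Or.inl rfl
            · exact Or.inr ⟨h, hx⟩
          · rintro (rfl | ⟨h, hx⟩)
            · exact ⟨Or.inl rfl, heS⟩
            · exact ⟨Or.inr h, hx⟩
        have hN'' : ∀ A, N (insert e A) ↔ N ((insert e A) \ S) := fun A => hN _
        rw [edgeProb_insert he]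
        have e1 : edgeProb E' p (fun A => S ⊆ insert e A ∧ N (insert e A))
            = edgeProb E' p (fun A => S ⊆ A ∧ (fun B => N (insert e B)) A) := by
          refine edgeProb_congr fun A hA => ?_
          have : S ⊆ insert e A ↔ S ⊆ A := by
            constructor
            · intro h x hx
              rcases Finset.mem_insert.1 (h hx) with rfl | h'
              · exact absurd hx heS
              · exact h'
            · intro h; exact h.trans (Finset.subset_insert _ _)
          rw [this]
        have hNi : ∀ A, N (insert e A) ↔ N ((insert e A) \ S) := fun A => hN _
        have hNinv : ∀ A, (fun B => N (insert e B)) A ↔ (fun B => N (insert e B)) (A \ S) := by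
          intro A
          simp only
          rw [hN (insert e A), hN (insert e (A \ S)), key A, key (A \ S)]
          have : (A \ S) \ S = A \ S := by
            ext x; simp only [Finset.mem_sdiff]; tauto
          rw [this]
        rw [e1, ih S hS' _ hNinv, ih S hS' N hN, edgeProb_insert he]
        ring

lemma edgeProb_subset {p : ℝ} {E S : Finset α} (hS : S ⊆ E) :
    edgeProb E p (fun A => S ⊆ A) = p ^ S.card := by
  have h := edgeProb_indep (p := p) E S hS (fun _ => True) (by simp)
  rw [edgeProb_true, mul_one] at h
  rw [← h]
  exact edgeProb_congr (by simp)

/-- Harris inequality for two increasing events. -/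
lemma harris {p : ℝ} (hp0 : 0 ≤ p) (hp1 : p ≤ 1) :
    ∀ (E : Finset α) (P Q : Finset α → Prop), Inc P → Inc Q →
      edgeProb E p P * edgeProb E p Q ≤ edgeProb E p (fun A => P A ∧ Q A) := by
  intro E
  induction E using Finset.induction_on with
  | empty =>
      intro P Q hP hQ
      by_cases h1 : P ∅ <;> by_cases h2 : Q ∅ <;>
        simp [edgeProb, h1, h2]
  | @insert e E' he ih =>
      intro P Q hP hQ
      rw [edgeProb_insert he p P, edgeProb_insert he p Q,
        edgeProb_insert he p (fun A => P A ∧ Q A)]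
      set a1 := edgeProb E' p (fun A => P (insert e A)) with ha1
      set a0 := edgeProb E' p P with ha0
      set b1 := edgeProb E' p (fun A => Q (insert e A)) with hb1
      set b0 := edgeProb E' p Q with hb0
      have hPi : Inc (fun A => P (insert e A)) := fun A B hAB h =>
        hP (Finset.insert_subset_insert e hAB) h
      have hQi : Inc (fun A => Q (insert e A)) := fun A B hAB h =>
        hQ (Finset.insert_subset_insert e hAB) h
      have h1 : a1 * b1 ≤ edgeProb E' p (fun A => P (insert e A) ∧ Q (insert e A)) :=
        ih _ _ hPi hQi
      have h0 : a0 * b0 ≤ edgeProb E' p (fun A => P A ∧ Q A) := ih _ _ hP hQ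
      have ha01 : a0 ≤ a1 :=
        edgeProb_mono hp0 hp1 (fun A _ h => hP (Finset.subset_insert e A) h)
      have hb01 : b0 ≤ b1 :=
        edgeProb_mono hp0 hp1 (fun A _ h => hQ (Finset.subset_insert e A) h)
      nlinarith [mul_nonneg hp0 (sub_nonneg.2 hp1), mul_nonneg
        (mul_nonneg hp0 (sub_nonneg.2 hp1)) (mul_nonneg (sub_nonneg.2 ha01) (sub_nonneg.2 hb01))]

lemma edgeProb_compl {p : ℝ} (E : Finset α) (N : Finset α → Prop) :
    edgeProb E p (fun A => ¬ N A) = 1 - edgeProb E p N := by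
  have h0 := edgeProb_split E p (fun _ => True) N
  rw [edgeProb_true] at h0
  have h1 : edgeProb E p (fun A => True ∧ N A) = edgeProb E p N :=
    edgeProb_congr (by simp)
  have h2 : edgeProb E p (fun A => True ∧ ¬ N A) = edgeProb E p (fun A => ¬ N A) :=
    edgeProb_congr (by simp)
  rw [h1, h2] at h0
  linarith

/-- Harris: increasing and decreasing events are negatively correlated. -/
lemma harris_inc_dec {p : ℝ} (hp0 : 0 ≤ p) (hp1 : p ≤ 1)
    (E : Finset α) (U N : Finset α → Prop) (hU : Inc U) (hN : Dec N) :
    edgeProb E p (fun A => U A ∧ N A) ≤ edgeProb E p U * edgeProb E p N := by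
  have hQ : Inc (fun A => ¬ N A) := fun A B hAB h hc => h (hN hAB hc)
  have h1 := harris hp0 hp1 E U (fun A => ¬ N A) hU hQ
  have hcongr : edgeProb E p (fun A => U A ∧ (fun A => ¬ N A) A)
      = edgeProb E p (fun A => U A ∧ ¬ N A) := edgeProb_congr (fun A _ => Iff.rfl)
  rw [hcongr] at h1
  have h2 := edgeProb_split E p U N
  have h3 := edgeProb_compl (p := p) E N
  rw [h3] at h1
  nlinarith

/-- Monotonicity of a decreasing event in `p`. -/
lemma edgeProb_anti {p q : ℝ} (hp0 : 0 ≤ p) (hpq : p ≤ q) (hq1 : q ≤ 1) :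
    ∀ (E : Finset α) (N : Finset α → Prop), Dec N →
      edgeProb E q N ≤ edgeProb E p N := by
  intro E
  induction E using Finset.induction_on with
  | empty =>
      intro N hN
      by_cases h : N ∅ <;> simp [edgeProb, h]
  | @insert e E' he ih =>
      intro N hN
      rw [edgeProb_insert he p N, edgeProb_insert he q N]
      have hNi : Dec (fun A => N (insert e A)) := fun A B hAB h =>
        hN (Finset.insert_subset_insert e hAB) h
      have h1 : edgeProb E' q (fun A => N (insert e A)) ≤ edgeProb E' p (fun A => N (insert e A)) :=
        ih _ hNi
      have h2 : edgeProb E' q N ≤ edgeProb E' p N := ih _ hN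
      have hap : edgeProb E' p (fun A => N (insert e A)) ≤ edgeProb E' p N :=
        edgeProb_mono hp0 (le_trans hpq hq1) (fun A _ h => hN (Finset.subset_insert e A) h)
      have hq0 : 0 ≤ q := le_trans hp0 hpq
      nlinarith [mul_le_mul_of_nonneg_left h1 hq0,
        mul_le_mul_of_nonneg_left h2 (by linarith : (0:ℝ) ≤ 1 - q),
        mul_nonneg (by linarith : (0:ℝ) ≤ q - p) (sub_nonneg.2 hap)]

section Chain

variable {I : Type*} (p : ℝ) (S : I → Finset α)

/-- No set of the family `S` indexed by the list `l` is fully contained in `A`. -/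
def NoneIn (S : I → Finset α) (l : List I) (A : Finset α) : Prop := ∀ j ∈ l, ¬ S j ⊆ A

/-- Janson exponent along a list. -/
noncomputable def jExp (p : ℝ) (S : I → Finset α) : List I → ℝ
  | [] => 0
  | j :: l => (p ^ (S j).card
      - (l.map fun j' => if (S j ∩ S j').Nonempty then p ^ (S j ∪ S j').card else 0).sum)
      + jExp p S l

lemma noneIn_dec (l : List I) : Dec (NoneIn S l) :=
  fun A B hAB h j hj hSA => h j hj (hSA.trans hAB)

lemma list_sum_map_mul {β : Type*} (l : List β) (f : β → ℝ) (c : ℝ) :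
    (l.map fun x => f x * c).sum = (l.map f).sum * c := by
  induction l with
  | nil => simp
  | cons x l ih => simp [ih, add_mul]

lemma filter_sum_eq_ite {β : Type*} (l : List β) (q : β → Prop) [DecidablePred q]
    (f : β → ℝ) :
    ((l.filter fun x => q x).map f).sum = (l.map fun x => if q x then f x else 0).sum := by
  induction l with
  | nil => simp
  | cons x l ih =>
      by_cases hx : q x <;> simp [List.filter_cons, hx, ih]

theorem janson_chain {E : Finset α} (hp0 : 0 ≤ p) (hp1 : p ≤ 1)
    (hSE : ∀ j : I, S j ⊆ E) :
    ∀ l : List I, edgeProb E p (NoneIn S l) ≤ Real.exp (-(jExp p S l)) := by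
  intro l
  induction l with
  | nil =>
      have h1 : edgeProb E p (NoneIn S []) = 1 := by
        rw [edgeProb_congr (Q := fun _ => True) (by simp [NoneIn]), edgeProb_true]
      rw [h1, jExp]
      simp
  | cons j l ih =>
      set J0 := l.filter (fun j' => ¬ (S j ∩ S j').Nonempty) with hJ0
      set J1 := l.filter (fun j' => (S j ∩ S j').Nonempty) with hJ1
      set b : ℝ := p ^ (S j).card - (J1.map fun j' => p ^ (S j ∪ S j').card).sum with hb
      have hJexp : jExp p S (j :: l) = b + jExp p S l := by
        rw [jExp, hb, hJ1, filter_sum_eq_ite]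
      -- membership facts
      have memJ0 : ∀ j', j' ∈ J0 ↔ j' ∈ l ∧ ¬ (S j ∩ S j').Nonempty := by
        intro j'; simp [hJ0, List.mem_filter]
      have memJ1 : ∀ j', j' ∈ J1 ↔ j' ∈ l ∧ (S j ∩ S j').Nonempty := by
        intro j'; simp [hJ1, List.mem_filter]
      -- step 1 : Pr(N_{j::l}) = Pr(N_l) - Pr(S_j ⊆ ∧ N_l)
      have hsplit := edgeProb_split E p (NoneIn S l) (fun A => S j ⊆ A)
      have hc1 : edgeProb E p (fun A => NoneIn S l A ∧ ¬ S j ⊆ A)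
          = edgeProb E p (NoneIn S (j :: l)) := by
        refine edgeProb_congr fun A _ => ?_
        simp only [NoneIn, List.mem_cons]
        constructor
        · rintro ⟨h1, h2⟩ j'' hj''
          rcases hj'' with rfl | hj''
          · exact h2
          · exact h1 j'' hj''
        · intro h
          exact ⟨fun j'' hj'' => h j'' (Or.inr hj''), h j (Or.inl rfl)⟩
      have hc2 : edgeProb E p (fun A => NoneIn S l A ∧ S j ⊆ A)
          = edgeProb E p (fun A => S j ⊆ A ∧ NoneIn S l A) :=
        edgeProb_congr fun A _ => and_comm
      have step1 : edgeProb E p (NoneIn S (j :: l))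
          = edgeProb E p (NoneIn S l) - edgeProb E p (fun A => S j ⊆ A ∧ NoneIn S l A) := by
        rw [← hc1, ← hc2]; linarith [hsplit]
      -- (i) independence from J0
      have hinv : ∀ A, NoneIn S J0 A ↔ NoneIn S J0 (A \ S j) := by
        intro A
        constructor
        · intro h j' hj' hsub
          exact h j' hj' (hsub.trans (Finset.sdiff_subset))
        · intro h j' hj' hsub
          rcases (memJ0 j').1 hj' with ⟨_, hdisj⟩
          refine h j' hj' (fun x hx => Finset.mem_sdiff.2 ⟨hsub hx, fun hxj => ?_⟩)
          exact hdisj ⟨x, Finset.mem_inter.2 ⟨hxj, hx⟩⟩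
      have indep : edgeProb E p (fun A => S j ⊆ A ∧ NoneIn S J0 A)
          = p ^ (S j).card * edgeProb E p (NoneIn S J0) :=
        edgeProb_indep E (S j) (hSE j) _ hinv
      -- (iii) Harris per j' ∈ J1
      have harris_step : ∀ j' : I,
          edgeProb E p (fun A => (S j ∪ S j') ⊆ A ∧ NoneIn S J0 A)
            ≤ p ^ (S j ∪ S j').card * edgeProb E p (NoneIn S J0) := by
        intro j'
        have hU : Inc (fun A => (S j ∪ S j') ⊆ A) := fun A B hAB h => h.trans hAB
        have := harris_inc_dec hp0 hp1 E _ _ hU (noneIn_dec S J0)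
        rwa [edgeProb_subset (Finset.union_subset (hSE j) (hSE j'))] at this
      -- (ii) splitting off J1
      have split2 := edgeProb_split E p (fun A => S j ⊆ A ∧ NoneIn S J0 A) (NoneIn S J1)
      have hfirst : edgeProb E p (fun A => (S j ⊆ A ∧ NoneIn S J0 A) ∧ NoneIn S J1 A)
          ≤ edgeProb E p (fun A => S j ⊆ A ∧ NoneIn S l A) := by
        refine edgeProb_mono hp0 hp1 fun A _ => ?_
        rintro ⟨⟨h1, h2⟩, h3⟩
        refine ⟨h1, fun j' hj' => ?_⟩
        by_cases hov : (S j ∩ S j').Nonempty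
        · exact h3 j' ((memJ1 j').2 ⟨hj', hov⟩)
        · exact h2 j' ((memJ0 j').2 ⟨hj', hov⟩)
      have hsecond : edgeProb E p (fun A => (S j ⊆ A ∧ NoneIn S J0 A) ∧ ¬ NoneIn S J1 A)
          ≤ (J1.map fun j' => p ^ (S j ∪ S j').card).sum * edgeProb E p (NoneIn S J0) := by
        have himp : edgeProb E p (fun A => (S j ⊆ A ∧ NoneIn S J0 A) ∧ ¬ NoneIn S J1 A)
            ≤ edgeProb E p (fun A => ∃ j' ∈ J1, (S j ∪ S j') ⊆ A ∧ NoneIn S J0 A) := by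
          refine edgeProb_mono hp0 hp1 fun A _ => ?_
          rintro ⟨⟨h1, h2⟩, h3⟩
          simp only [NoneIn, not_forall] at h3
          rcases h3 with ⟨j', hj', hsub⟩
          rw [not_not] at hsub
          exact ⟨j', hj', Finset.union_subset h1 hsub, h2⟩
        refine himp.trans ((edgeProb_union_bound hp0 hp1 J1 _).trans ?_)
        rw [← list_sum_map_mul]
        refine List.sum_le_sum ?_
        intro j' hj'
        exact harris_step j'
      -- combine (i),(ii),(iii)
      have key : p ^ (S j).card * edgeProb E p (NoneIn S J0)
          ≤ edgeProb E p (fun A => S j ⊆ A ∧ NoneIn S l A)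
            + (J1.map fun j' => p ^ (S j ∪ S j').card).sum * edgeProb E p (NoneIn S J0) := by
        rw [← indep]
        calc edgeProb E p (fun A => S j ⊆ A ∧ NoneIn S J0 A)
            = _ + _ := split2
          _ ≤ _ := add_le_add hfirst hsecond
      have hmono0 : edgeProb E p (NoneIn S l) ≤ edgeProb E p (NoneIn S J0) := by
        refine edgeProb_mono hp0 hp1 fun A _ h j' hj' => h j' ((memJ0 j').1 hj').1
      have hNl0 : 0 ≤ edgeProb E p (NoneIn S l) := edgeProb_nonneg hp0 hp1 _
      have hNj0 : 0 ≤ edgeProb E p (NoneIn S J0) := edgeProb_nonneg hp0 hp1 _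
      have hmain : edgeProb E p (NoneIn S (j :: l)) ≤ Real.exp (-b) * edgeProb E p (NoneIn S l) := by
        by_cases hbsign : 0 ≤ b
        · have hkey2 : b * edgeProb E p (NoneIn S l)
              ≤ edgeProb E p (fun A => S j ⊆ A ∧ NoneIn S l A) := by
            have h1 : b * edgeProb E p (NoneIn S J0)
                ≤ edgeProb E p (fun A => S j ⊆ A ∧ NoneIn S l A) := by
              rw [hb]; nlinarith [key]
            calc b * edgeProb E p (NoneIn S l) ≤ b * edgeProb E p (NoneIn S J0) :=
                  mul_le_mul_of_nonneg_left hmono0 hbsign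
              _ ≤ _ := h1
          rw [step1]
          have h2 : edgeProb E p (NoneIn S l) - edgeProb E p (fun A => S j ⊆ A ∧ NoneIn S l A)
              ≤ (1 - b) * edgeProb E p (NoneIn S l) := by nlinarith
          refine h2.trans ?_
          have h3 : (1 : ℝ) - b ≤ Real.exp (-b) := by
            have := Real.add_one_le_exp (-b); linarith
          exact mul_le_mul_of_nonneg_right h3 hNl0
        · have h4 : edgeProb E p (NoneIn S (j :: l)) ≤ edgeProb E p (NoneIn S l) := by
            refine edgeProb_mono hp0 hp1 fun A _ h j' hj' => h j' (List.mem_cons_of_mem j hj')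
          have h5 : (1:ℝ) ≤ Real.exp (-b) := by
            rw [Real.one_le_exp_iff]; linarith
          nlinarith
      rw [hJexp]
      calc edgeProb E p (NoneIn S (j :: l)) ≤ Real.exp (-b) * edgeProb E p (NoneIn S l) := hmain
        _ ≤ Real.exp (-b) * Real.exp (-(jExp p S l)) :=
            mul_le_mul_of_nonneg_left ih (Real.exp_nonneg _)
        _ = Real.exp (-(b + jExp p S l)) := by rw [← Real.exp_add]; ring_nf

end Chain

section Constr

variable {n k m : ℕ}

/-- The vertex of class `i` with index `g i`. -/
def vtx (hkm : k * m ≤ n) (g : Fin k → Fin m) (i : Fin k) : Fin n :=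
  ⟨i.1 + k * (g i).1, by
    have h1 : (g i).1 + 1 ≤ m := (g i).2
    have h2 : k * ((g i).1 + 1) ≤ k * m := Nat.mul_le_mul_left k h1
    rw [Nat.mul_succ] at h2
    have h3 := i.2
    omega⟩

lemma vtx_mod (hkm : k * m ≤ n) (g : Fin k → Fin m) (i : Fin k) :
    (vtx hkm g i).1 % k = i.1 := by
  show (i.1 + k * (g i).1) % k = i.1
  rw [Nat.add_mul_mod_self_left, Nat.mod_eq_of_lt i.2]

lemma vtx_inj (hkm : k * m ≤ n) {g g' : Fin k → Fin m} {i i' : Fin k}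
    (h : vtx hkm g i = vtx hkm g' i') : i = i' ∧ g i = g' i' := by
  have hval : i.1 + k * (g i).1 = i'.1 + k * (g' i').1 := congrArg Fin.val h
  have hk : 0 < k := i.pos
  have hmod : i.1 = i'.1 := by
    have := congrArg (· % k) hval
    simpa [Nat.add_mul_mod_self_left, Nat.mod_eq_of_lt i.2, Nat.mod_eq_of_lt i'.2] using this
  have hdiv : (g i).1 = (g' i').1 := by
    have := congrArg (· / k) hval
    simpa [Nat.add_mul_div_left _ _ hk, Nat.div_eq_of_lt i.2, Nat.div_eq_of_lt i'.2] using this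
  exact ⟨Fin.ext hmod, Fin.ext hdiv⟩

/-- The pair set used for edges of a copy. -/
def ltPairs (k : ℕ) : Finset (Fin k × Fin k) :=
  Finset.univ.filter fun ij => ij.1 < ij.2

/-- The edge set of the good copy determined by `g`. -/
def copyEdges (hkm : k * m ≤ n) (g : Fin k → Fin m) : Finset (Sym2 (Fin n)) :=
  (ltPairs k).image fun ij => s(vtx hkm g ij.1, vtx hkm g ij.2)

lemma copyEdges_subset (hkm : k * m ≤ n) (g : Fin k → Fin m) :
    copyEdges hkm g ⊆ turanEdges n k := by
  intro e he
  rcases Finset.mem_image.1 he with ⟨ij, hij, rfl⟩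
  rw [ltPairs, Finset.mem_filter] at hij
  refine Finset.mem_filter.2 ⟨Finset.mem_univ _, ?_⟩
  rw [Sym2.map_pair_eq, Sym2.mk_isDiag_iff]
  intro hcon
  rw [vtx_mod, vtx_mod] at hcon
  exact absurd (Fin.ext hcon) (ne_of_lt hij.2)

lemma card_copyEdges (hkm : k * m ≤ n) (g : Fin k → Fin m) :
    (copyEdges hkm g).card = (ltPairs k).card := by
  refine Finset.card_image_of_injOn ?_
  intro ij hij ij' hij' heq
  rw [ltPairs, Finset.mem_coe, Finset.mem_filter] at hij hij'
  rcases Sym2.eq_iff.1 heq with ⟨h1, h2⟩ | ⟨h1, h2⟩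
  · have e1 := (vtx_inj hkm h1).1
    have e2 := (vtx_inj hkm h2).1
    exact Prod.ext e1 e2
  · have e1 := (vtx_inj hkm h1).1
    have e2 := (vtx_inj hkm h2).1
    exfalso
    have h3 : ij'.1 < ij'.2 := hij'.2
    rw [← e2, ← e1] at h3
    exact absurd hij.2 (not_lt.2 h3.le)

lemma good_of_copy (hkm : k * m ≤ n) (g : Fin k → Fin m) (A : Finset (Sym2 (Fin n)))
    (h : copyEdges hkm g ⊆ A) : GoodCopy n k A := by
  refine ⟨vtx hkm g, ?_, ?_, ?_⟩
  · intro i i' hii'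
    exact (vtx_inj hkm hii').1
  · intro i j hij
    rw [vtx_mod, vtx_mod]
    exact fun hc => hij (Fin.ext hc)
  · intro i j hij
    rcases lt_or_gt_of_ne hij with hlt | hgt
    · exact h (Finset.mem_image.2 ⟨(i, j), Finset.mem_filter.2 ⟨Finset.mem_univ _, hlt⟩, rfl⟩)
    · have : s(vtx hkm g i, vtx hkm g j) = s(vtx hkm g j, vtx hkm g i) := Sym2.eq_swap
      rw [this]
      exact h (Finset.mem_image.2 ⟨(j, i), Finset.mem_filter.2 ⟨Finset.mem_univ _, hgt⟩, rfl⟩)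

/-- Agreement set of two copies. -/
def agree (g g' : Fin k → Fin m) : Finset (Fin k) :=
  Finset.univ.filter fun i => g i = g' i

lemma inter_copyEdges_subset (hkm : k * m ≤ n) (g g' : Fin k → Fin m) :
    copyEdges hkm g ∩ copyEdges hkm g'
      ⊆ (((agree g g') ×ˢ (agree g g')).filter fun ij => ij.1 < ij.2).image
          fun ij => s(vtx hkm g ij.1, vtx hkm g ij.2) := by
  intro e he
  rw [Finset.mem_inter] at he
  rcases Finset.mem_image.1 he.1 with ⟨ij, hij, rfl⟩
  rcases Finset.mem_image.1 he.2 with ⟨ij', hij', heq⟩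
  rw [ltPairs, Finset.mem_filter] at hij hij'
  have hagree : ij.1 ∈ agree g g' ∧ ij.2 ∈ agree g g' := by
    rcases Sym2.eq_iff.1 heq with ⟨h1, h2⟩ | ⟨h1, h2⟩
    · have e1 := vtx_inj hkm h1
      have e2 := vtx_inj hkm h2
      constructor
      · refine Finset.mem_filter.2 ⟨Finset.mem_univ _, ?_⟩
        have := e1.2; rw [e1.1] at this; exact this.symm
      · refine Finset.mem_filter.2 ⟨Finset.mem_univ _, ?_⟩
        have := e2.2; rw [e2.1] at this; exact this.symm
    · have e1 := vtx_inj hkm h1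
      have e2 := vtx_inj hkm h2
      exfalso
      have : ij.1 < ij.1 :=
        calc ij.1 < ij.2 := hij.2
          _ = ij'.1 := e1.1.symm
          _ < ij'.2 := hij'.2
          _ = ij.1 := e2.1
      exact lt_irrefl _ this
  exact Finset.mem_image.2 ⟨ij, Finset.mem_filter.2
    ⟨Finset.mem_product.2 ⟨hagree.1, hagree.2⟩, hij.2⟩, rfl⟩

lemma overlap_two_le (hkm : k * m ≤ n) {g g' : Fin k → Fin m}
    (h : (copyEdges hkm g ∩ copyEdges hkm g').Nonempty) : 2 ≤ (agree g g').card := by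
  rcases h with ⟨e, he⟩
  have := inter_copyEdges_subset hkm g g' he
  rcases Finset.mem_image.1 this with ⟨ij, hij, _⟩
  rw [Finset.mem_filter, Finset.mem_product] at hij
  have hne : ij.1 ≠ ij.2 := ne_of_lt hij.2
  calc 2 = ({ij.1, ij.2} : Finset (Fin k)).card := by rw [Finset.card_insert_of_notMem (by simpa using hne), Finset.card_singleton]
    _ ≤ (agree g g').card := Finset.card_le_card (by
        intro x hx
        rcases Finset.mem_insert.1 hx with rfl | hx
        · exact hij.1.1
        · rw [Finset.mem_singleton] at hx; subst hx; exact hij.1.2)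

lemma agree_card_lt {g g' : Fin k → Fin m} (hgg : g ≠ g') : (agree g g').card < k := by
  have hne : agree g g' ≠ Finset.univ := by
    intro hc
    apply hgg
    funext i
    have : i ∈ agree g g' := hc ▸ Finset.mem_univ i
    exact (Finset.mem_filter.1 this).2
  have hsub : agree g g' ⊂ Finset.univ := ⟨Finset.subset_univ _, fun h => hne (Finset.univ_subset_iff.1 h)⟩
  calc (agree g g').card < Finset.univ.card := Finset.card_lt_card hsub
    _ = k := by simp

/-- Number of ordered pairs `(a,b)` with `a < b` in `s`. -/
lemma two_mul_card_ltPairs {β : Type*} [DecidableEq β] [LinearOrder β] (s : Finset β) :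
    2 * ((s ×ˢ s).filter fun ab => ab.1 < ab.2).card = s.card * (s.card - 1) := by
  have hswap : ((s ×ˢ s).filter fun ab => ab.1 < ab.2).card
      = ((s ×ˢ s).filter fun ab => ab.2 < ab.1).card := by
    refine Finset.card_bij (fun ab _ => (ab.2, ab.1)) ?_ ?_ ?_
    · intro ab hab
      rw [Finset.mem_filter, Finset.mem_product] at hab ⊢
      exact ⟨⟨hab.1.2, hab.1.1⟩, hab.2⟩
    · intro a ha b hb hab
      rw [Prod.ext_iff] at hab
      exact Prod.ext hab.2 hab.1
    · intro ab hab
      rw [Finset.mem_filter, Finset.mem_product] at hab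
      exact ⟨(ab.2, ab.1), Finset.mem_filter.2 ⟨Finset.mem_product.2 ⟨hab.1.2, hab.1.1⟩, hab.2⟩, rfl⟩
  have hunion : ((s ×ˢ s).filter fun ab => ab.1 < ab.2) ∪ ((s ×ˢ s).filter fun ab => ab.2 < ab.1)
      = s.offDiag := by
    rw [← Finset.filter_or]
    ext ab; rw [Finset.mem_filter, Finset.mem_offDiag, Finset.mem_product, and_assoc]
    refine and_congr_right fun _ => and_congr_right fun _ => ?_
    constructor
    · rintro (h | h) <;> [exact ne_of_lt h; exact (ne_of_lt h).symm]
    · intro h; exact lt_or_gt_of_ne h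
  have hdisj : Disjoint ((s ×ˢ s).filter fun ab => ab.1 < ab.2)
      ((s ×ˢ s).filter fun ab => ab.2 < ab.1) := by
    rw [Finset.disjoint_left]
    intro ab h1 h2
    rw [Finset.mem_filter] at h1 h2
    exact absurd h1.2 (not_lt.2 h2.2.le)
  have hcard := Finset.card_union_of_disjoint hdisj
  rw [hunion, Finset.offDiag_card, ← hswap] at hcard
  have hc : s.card * s.card - s.card = s.card * (s.card - 1) := by
    cases s.card with
    | zero => simp
    | succ c => rw [Nat.succ_sub_one, Nat.mul_succ]; omega
  omega

/-- Fiber counting: functions agreeing with `g` on `T`. -/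
lemma fiber_card (g : Fin k → Fin m) (T : Finset (Fin k)) :
    (Finset.univ.filter fun g' : Fin k → Fin m => ∀ i ∈ T, g i = g' i).card
      ≤ m ^ (k - T.card) := by
  classical
  have hinj : Set.InjOn (fun g' : Fin k → Fin m => fun i : {i : Fin k // i ∉ T} => g' i.1)
      (Finset.univ.filter fun g' : Fin k → Fin m => ∀ i ∈ T, g i = g' i) := by
    intro g1 h1 g2 h2 heq
    rw [Finset.coe_filter] at h1 h2
    funext i
    by_cases hi : i ∈ T
    · rw [← h1.2 i hi, ← h2.2 i hi]
    · exact congrFun heq ⟨i, hi⟩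
  have hcard := Finset.card_le_card_of_injOn _ (fun g' _ => Finset.mem_univ _) hinj
  refine hcard.trans ?_
  rw [Finset.card_univ]
  have h1 : Fintype.card ({i : Fin k // i ∉ T} → Fin m)
      = m ^ Fintype.card {i : Fin k // i ∉ T} := by
    rw [Fintype.card_fun, Fintype.card_fin]
  rw [h1]
  have h2 : Fintype.card {i : Fin k // i ∉ T} = k - T.card := by
    rw [Fintype.card_subtype]
    have : Finset.univ.filter (fun i : Fin k => i ∉ T) = Finset.univ \ T := by
      ext i; simp
    rw [this, Finset.card_sdiff_of_subset (Finset.subset_univ T)]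
    simp
  rw [h2]

variable {p : ℝ}

/-- Per-copy overlap sum bound, grouped by agreement sets. -/
lemma per_copy_bound (hkm : k * m ≤ n) (hp0 : 0 ≤ p) (hp1 : p ≤ 1) (g : Fin k → Fin m) :
    ∑ g' ∈ (Finset.univ.erase g).filter
        (fun g' => (copyEdges hkm g ∩ copyEdges hkm g').Nonempty),
      p ^ (copyEdges hkm g ∪ copyEdges hkm g').card
    ≤ ∑ T ∈ Finset.univ.powerset.filter (fun T : Finset (Fin k) => 2 ≤ T.card ∧ T.card < k),
        (m : ℝ) ^ (k - T.card) * p ^ (2 * (ltPairs k).card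
          - ((T ×ˢ T).filter fun ab => ab.1 < ab.2).card) := by
  classical
  set s := (Finset.univ.erase g).filter
      (fun g' => (copyEdges hkm g ∩ copyEdges hkm g').Nonempty) with hs
  set t := Finset.univ.powerset.filter
      (fun T : Finset (Fin k) => 2 ≤ T.card ∧ T.card < k) with ht
  set K := (ltPairs k).card with hK
  have hmaps : ∀ g' ∈ s, agree g g' ∈ t := by
    intro g' hg'
    rw [hs, Finset.mem_filter, Finset.mem_erase] at hg'
    rw [ht, Finset.mem_filter]
    exact ⟨Finset.mem_powerset.2 (Finset.subset_univ _),
      overlap_two_le hkm hg'.2, agree_card_lt (Ne.symm hg'.1.1)⟩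
  have step1 : ∑ g' ∈ s, p ^ (copyEdges hkm g ∪ copyEdges hkm g').card
      ≤ ∑ g' ∈ s, p ^ (2 * K - ((agree g g' ×ˢ agree g g').filter
          fun ab => ab.1 < ab.2).card) := by
    refine Finset.sum_le_sum fun g' hg' => ?_
    have hIcard : (copyEdges hkm g ∩ copyEdges hkm g').card
        ≤ ((agree g g' ×ˢ agree g g').filter fun ab => ab.1 < ab.2).card :=
      (Finset.card_le_card (inter_copyEdges_subset hkm g g')).trans Finset.card_image_le
    have hU : 2 * K - ((agree g g' ×ˢ agree g g').filter fun ab => ab.1 < ab.2).card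
        ≤ (copyEdges hkm g ∪ copyEdges hkm g').card := by
      have := Finset.card_union_add_card_inter (copyEdges hkm g) (copyEdges hkm g')
      rw [card_copyEdges, card_copyEdges] at this
      omega
    exact pow_le_pow_of_le_one hp0 hp1 hU
  have step2 : ∑ g' ∈ s, p ^ (2 * K - ((agree g g' ×ˢ agree g g').filter
          fun ab => ab.1 < ab.2).card)
      = ∑ T ∈ t, ∑ g' ∈ s.filter (fun g' => agree g g' = T),
          p ^ (2 * K - ((agree g g' ×ˢ agree g g').filter fun ab => ab.1 < ab.2).card) :=
    (Finset.sum_fiberwise_of_maps_to hmaps _).symm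
  have step3 : ∀ T ∈ t, ∑ g' ∈ s.filter (fun g' => agree g g' = T),
        p ^ (2 * K - ((agree g g' ×ˢ agree g g').filter fun ab => ab.1 < ab.2).card)
      ≤ (m : ℝ) ^ (k - T.card) * p ^ (2 * K - ((T ×ˢ T).filter fun ab => ab.1 < ab.2).card) := by
    intro T _
    have hconst : ∑ g' ∈ s.filter (fun g' => agree g g' = T),
          p ^ (2 * K - ((agree g g' ×ˢ agree g g').filter fun ab => ab.1 < ab.2).card)
        = (s.filter (fun g' => agree g g' = T)).card
            * p ^ (2 * K - ((T ×ˢ T).filter fun ab => ab.1 < ab.2).card) := by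
      rw [Finset.sum_congr rfl (fun g' hg' => by
        rw [(Finset.mem_filter.1 hg').2]), Finset.sum_const, nsmul_eq_mul]
    rw [hconst]
    refine mul_le_mul_of_nonneg_right ?_ (pow_nonneg hp0 _)
    have hsub : s.filter (fun g' => agree g g' = T)
        ⊆ Finset.univ.filter fun g' : Fin k → Fin m => ∀ i ∈ T, g i = g' i := by
      intro g' hg'
      rw [Finset.mem_filter] at hg'
      refine Finset.mem_filter.2 ⟨Finset.mem_univ _, fun i hi => ?_⟩
      rw [← hg'.2] at hi
      exact (Finset.mem_filter.1 hi).2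
    calc ((s.filter (fun g' => agree g g' = T)).card : ℝ)
        ≤ ((Finset.univ.filter fun g' : Fin k → Fin m => ∀ i ∈ T, g i = g' i).card : ℝ) := by
          exact_mod_cast Finset.card_le_card hsub
      _ ≤ ((m ^ (k - T.card) : ℕ) : ℝ) := by exact_mod_cast fiber_card g T
      _ = (m : ℝ) ^ (k - T.card) := by push_cast; ring
  calc ∑ g' ∈ s, p ^ (copyEdges hkm g ∪ copyEdges hkm g').card
      ≤ _ := step1
    _ = _ := step2
    _ ≤ _ := Finset.sum_le_sum step3

end Constr

section Numeric

variable {n k m : ℕ}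

/-- `2 * (ltPairs k).card = k * (k - 1)`. -/
lemma two_mul_card_ltPairs_univ (k : ℕ) :
    2 * (ltPairs k).card = k * (k - 1) := by
  have h := two_mul_card_ltPairs (Finset.univ : Finset (Fin k))
  rw [Finset.univ_product_univ] at h
  rw [ltPairs]
  rw [h, Finset.card_univ, Fintype.card_fin]

/-- Key exponent inequality: `(k-t)*(k+1) ≤ 2*(K - C_T)`. -/
lemma exponent_ineq {t C K : ℕ} (h2 : 2 ≤ t) (hlt : t < k)
    (hC : 2 * C = t * (t - 1)) (hK : 2 * K = k * (k - 1)) :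
    (k - t) * (k + 1) ≤ 2 * (K - C) := by
  have hCK : C ≤ K := by
    have h1 : t * (t - 1) ≤ k * (k - 1) :=
      Nat.mul_le_mul hlt.le (Nat.sub_le_sub_right hlt.le 1)
    omega
  have h2KC : 2 * (K - C) = k * (k - 1) - t * (t - 1) := by omega
  rw [h2KC]
  obtain ⟨u, rfl⟩ : ∃ u, t = u + 2 := ⟨t - 2, by omega⟩
  obtain ⟨a, rfl⟩ : ∃ a, k = (u + 2) + a + 1 := ⟨k - u - 3, by omega⟩
  have e1 : (u + 2 + a + 1) - (u + 2) = a + 1 := by omega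
  have e2 : (u + 2 + a + 1) - 1 = u + a + 2 := by omega
  have e3 : (u + 2) - 1 = u + 1 := by omega
  rw [e1, e2, e3]
  have expand : (u + 2 + a + 1) * (u + a + 2) = (u + 2) * (u + 1) + (a+1)*(u+2) + (a + 1) * (u + a + 2) := by ring
  rw [expand]
  have : (a + 1) * (u + 2 + a + 1 + 1) ≤ (a+1)*(u+2) + (a + 1) * (u + a + 2) := by nlinarith
  omega

/-- Single `T` bound. -/
lemma perT_numeric (hn : 1 ≤ n) (hm : (m : ℝ) ≤ (n : ℝ) / 2 ^ (k + 1))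
    (T : Finset (Fin k)) (h2 : 2 ≤ T.card) (hlt : T.card < k) :
    (m : ℝ) ^ (k - T.card) * ((n : ℝ) ^ (-2 / ((k : ℝ) + 1))) ^ (2 * (ltPairs k).card
        - ((T ×ˢ T).filter fun ab => ab.1 < ab.2).card)
      ≤ (1 / 2 ^ (k + 1)) * ((n : ℝ) ^ (-2 / ((k : ℝ) + 1))) ^ (ltPairs k).card := by
  set p : ℝ := (n : ℝ) ^ (-2 / ((k : ℝ) + 1)) with hp
  set t := T.card
  set C := ((T ×ˢ T).filter fun ab => ab.1 < ab.2).card with hCdef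
  set K := (ltPairs k).card with hKdef
  have hn0 : (0 : ℝ) < (n : ℝ) := by exact_mod_cast hn
  have hn1 : (1 : ℝ) ≤ (n : ℝ) := by exact_mod_cast hn
  have hp0 : 0 ≤ p := Real.rpow_nonneg hn0.le _
  have h2C : 2 * C = t * (t - 1) := by
    have := two_mul_card_ltPairs T
    rwa [← hCdef] at this
  have h2K : 2 * K = k * (k - 1) := two_mul_card_ltPairs_univ k
  have hCK : C ≤ K := by
    have h1 : t * (t - 1) ≤ k * (k - 1) :=
      Nat.mul_le_mul hlt.le (Nat.sub_le_sub_right hlt.le 1)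
    omega
  have hexp : (k - t) * (k + 1) ≤ 2 * (K - C) := exponent_ineq h2 hlt h2C h2K
  have hsplit : 2 * K - C = K + (K - C) := by omega
  rw [hsplit, pow_add]
  rw [show (m:ℝ) ^ (k - t) * (p ^ K * p ^ (K - C))
      = ((m:ℝ) ^ (k - t) * p ^ (K - C)) * p ^ K by ring]
  refine mul_le_mul_of_nonneg_right ?_ (pow_nonneg hp0 _)
  -- now show m^(k-t) * p^(K-C) ≤ 1/2^(k+1)
  set a := k - t with hadef
  set c := K - C with hcdef
  have ha1 : 1 ≤ a := by omega
  have hkey : (n : ℝ) ^ (a : ℕ) * p ^ c ≤ 1 := by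
    have e1 : (n : ℝ) ^ (a : ℕ) = (n : ℝ) ^ ((a : ℕ) : ℝ) := (Real.rpow_natCast _ _).symm
    have e2 : p ^ c = (n : ℝ) ^ ((-2 / ((k : ℝ) + 1)) * c) := by
      rw [hp, ← Real.rpow_natCast ((n:ℝ) ^ (-2 / ((k:ℝ)+1))) c, ← Real.rpow_mul hn0.le]
    rw [e1, e2, ← Real.rpow_add hn0]
    refine Real.rpow_le_one_of_one_le_of_nonpos hn1 ?_
    have hcast : (a : ℝ) * ((k : ℝ) + 1) ≤ 2 * (c : ℝ) := by
      have := hexp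
      have hcast2 : ((k - t) * (k + 1) : ℕ) ≤ ((2 * (K - C) : ℕ)) := this
      calc (a : ℝ) * ((k : ℝ) + 1) = (((k - t) * (k + 1) : ℕ) : ℝ) := by
            push_cast [hadef]; ring
        _ ≤ (((2 * (K - C)) : ℕ) : ℝ) := by exact_mod_cast hcast2
        _ = 2 * (c : ℝ) := by push_cast [hcdef]; ring
    have hk1 : (0 : ℝ) < (k : ℝ) + 1 := by positivity
    rw [div_mul_eq_mul_div, neg_mul]
    rw [neg_div, ← sub_eq_add_neg, sub_nonpos]
    rw [le_div_iff₀ hk1]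
    linarith
  have hm0 : (0 : ℝ) ≤ (m : ℝ) := Nat.cast_nonneg m
  have hmb : (m : ℝ) ^ a ≤ (n : ℝ) ^ a / 2 ^ (k + 1) := by
    calc (m : ℝ) ^ a ≤ ((n : ℝ) / 2 ^ (k + 1)) ^ a := pow_le_pow_left₀ hm0 hm a
      _ = (n : ℝ) ^ a / (2 ^ (k + 1) : ℝ) ^ a := div_pow _ _ a
      _ ≤ (n : ℝ) ^ a / 2 ^ (k + 1) := by
          refine div_le_div_of_nonneg_left (pow_nonneg hn0.le a) (by positivity) ?_
          exact le_self_pow₀ (one_le_pow₀ (by norm_num : (1:ℝ) ≤ 2)) (by omega)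
  calc (m : ℝ) ^ a * p ^ c ≤ ((n : ℝ) ^ a / 2 ^ (k + 1)) * p ^ c :=
        mul_le_mul_of_nonneg_right hmb (pow_nonneg hp0 _)
    _ = ((n : ℝ) ^ a * p ^ c) / 2 ^ (k + 1) := by ring
    _ ≤ 1 / 2 ^ (k + 1) := by
        refine div_le_div_of_nonneg_right hkey (by positivity)

end Numeric

section Assemble
variable {n k m : ℕ} {p : ℝ}

/-- Sum over all admissible agreement sets is at most `p^K / 2`. -/
lemma total_delta (hn : 1 ≤ n) (hm : (m : ℝ) ≤ (n : ℝ) / 2 ^ (k + 1)) :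
    ∑ T ∈ Finset.univ.powerset.filter (fun T : Finset (Fin k) => 2 ≤ T.card ∧ T.card < k),
        (m : ℝ) ^ (k - T.card) * ((n : ℝ) ^ (-2 / ((k : ℝ) + 1))) ^ (2 * (ltPairs k).card
          - ((T ×ˢ T).filter fun ab => ab.1 < ab.2).card)
      ≤ ((n : ℝ) ^ (-2 / ((k : ℝ) + 1))) ^ (ltPairs k).card / 2 := by
  classical
  set p0 : ℝ := (n : ℝ) ^ (-2 / ((k : ℝ) + 1)) with hp0def
  set t := Finset.univ.powerset.filter (fun T : Finset (Fin k) => 2 ≤ T.card ∧ T.card < k)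
    with htdef
  have hb : ∀ T ∈ t, (m : ℝ) ^ (k - T.card) * p0 ^ (2 * (ltPairs k).card
      - ((T ×ˢ T).filter fun ab => ab.1 < ab.2).card) ≤ (1 / 2 ^ (k + 1)) * p0 ^ (ltPairs k).card := by
    intro T hT
    rw [htdef, Finset.mem_filter] at hT
    exact perT_numeric hn hm T hT.2.1 hT.2.2
  have hsum := Finset.sum_le_card_nsmul t _ _ hb
  refine hsum.trans ?_
  rw [nsmul_eq_mul]
  have hcard : (t.card : ℝ) ≤ 2 ^ k := by
    have h1 : t.card ≤ (Finset.univ : Finset (Fin k)).powerset.card :=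
      Finset.card_le_card (Finset.filter_subset _ _)
    rw [Finset.card_powerset, Finset.card_univ, Fintype.card_fin] at h1
    exact_mod_cast h1
  have hp0nn : (0 : ℝ) ≤ p0 ^ (ltPairs k).card :=
    pow_nonneg (Real.rpow_nonneg (Nat.cast_nonneg n) _) _
  calc (t.card : ℝ) * ((1 / 2 ^ (k + 1)) * p0 ^ (ltPairs k).card)
      ≤ (2 : ℝ) ^ k * ((1 / 2 ^ (k + 1)) * p0 ^ (ltPairs k).card) := by
        refine mul_le_mul_of_nonneg_right hcard (by positivity)
    _ = p0 ^ (ltPairs k).card / 2 := by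
        rw [pow_succ]
        field_simp

/-- The inner (list) overlap sum is at most `p^K / 2`. -/
lemma inner_le (hkm : k * m ≤ n) (hn : 1 ≤ n) (hm : (m : ℝ) ≤ (n : ℝ) / 2 ^ (k + 1))
    {g : Fin k → Fin m} {l : List (Fin k → Fin m)} (hnd : l.Nodup) (hg : g ∉ l) :
    (l.map fun j' => if (copyEdges hkm g ∩ copyEdges hkm j').Nonempty
        then ((n : ℝ) ^ (-2 / ((k : ℝ) + 1))) ^ (copyEdges hkm g ∪ copyEdges hkm j').card
        else 0).sum
      ≤ ((n : ℝ) ^ (-2 / ((k : ℝ) + 1))) ^ (ltPairs k).card / 2 := by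
  classical
  set p0 : ℝ := (n : ℝ) ^ (-2 / ((k : ℝ) + 1)) with hp0def
  have hp00 : 0 ≤ p0 := Real.rpow_nonneg (Nat.cast_nonneg n) _
  have hp01 : p0 ≤ 1 := Real.rpow_le_one_of_one_le_of_nonpos (by exact_mod_cast hn)
    (by
      have : (0:ℝ) < (k:ℝ) + 1 := by positivity
      rw [div_nonpos_iff]
      right
      constructor <;> linarith)
  set F : (Fin k → Fin m) → ℝ := fun j' => if (copyEdges hkm g ∩ copyEdges hkm j').Nonempty
      then p0 ^ (copyEdges hkm g ∪ copyEdges hkm j').card else 0 with hF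
  have h1 : (l.map F).sum = l.toFinset.sum F := (List.sum_toFinset F hnd).symm
  rw [h1]
  have hFnn : ∀ j', 0 ≤ F j' := by
    intro j'
    rw [hF]
    dsimp only
    split
    · exact pow_nonneg hp00 _
    · exact le_refl 0
  have h2 : l.toFinset.sum F ≤ (Finset.univ.erase g).sum F := by
    refine Finset.sum_le_sum_of_subset_of_nonneg ?_ (fun j' _ _ => hFnn j')
    intro x hx
    rw [List.mem_toFinset] at hx
    refine Finset.mem_erase.2 ⟨fun hc => hg (hc ▸ hx), Finset.mem_univ _⟩
  have h3 : (Finset.univ.erase g).sum F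
      = ∑ g' ∈ (Finset.univ.erase g).filter
          (fun g' => (copyEdges hkm g ∩ copyEdges hkm g').Nonempty),
        p0 ^ (copyEdges hkm g ∪ copyEdges hkm g').card := (Finset.sum_filter _ _).symm
  calc l.toFinset.sum F ≤ (Finset.univ.erase g).sum F := h2
    _ = _ := h3
    _ ≤ _ := per_copy_bound hkm hp00 hp01 g
    _ ≤ p0 ^ (ltPairs k).card / 2 := total_delta hn hm

lemma jExp_ge (hkm : k * m ≤ n) (hn : 1 ≤ n) (hm : (m : ℝ) ≤ (n : ℝ) / 2 ^ (k + 1)) :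
    ∀ l : List (Fin k → Fin m), l.Nodup →
      (l.length : ℝ) * (((n : ℝ) ^ (-2 / ((k : ℝ) + 1))) ^ (ltPairs k).card / 2)
        ≤ jExp ((n : ℝ) ^ (-2 / ((k : ℝ) + 1))) (copyEdges hkm) l := by
  intro l
  induction l with
  | nil => intro _; simp [jExp]
  | cons j l ih =>
      intro hnd
      rcases List.nodup_cons.1 hnd with ⟨hj, hnd'⟩
      have hinner := inner_le hkm hn hm hnd' hj
      have hih := ih hnd'
      show (((j :: l).length : ℕ) : ℝ) * _ ≤ (_ - _) + jExp _ _ l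
      rw [List.length_cons, card_copyEdges hkm j]
      push_cast
      set p0 : ℝ := (n : ℝ) ^ (-2 / ((k : ℝ) + 1))
      set K := (ltPairs k).card
      linarith

lemma goodCopy_inc {N k' : ℕ} : Inc (fun A => GoodCopy N k' A) := by
  rintro A B hAB ⟨f, hinj, hres, hedge⟩
  exact ⟨f, hinj, hres, fun i j hij => hAB (hedge i j hij)⟩

theorem no_good_copy_prob_binomial' (k : ℕ) (hk : 3 ≤ k) :
    ∃ c₁ : ℝ, 0 < c₁ ∧ ∃ n₀ : ℕ, ∀ n : ℕ, n₀ ≤ n → ∀ p : ℝ,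
      (n : ℝ) ^ (-2 / (k + 1 : ℝ)) ≤ p → p ≤ 4 * (n : ℝ) ^ (-2 / (k + 1 : ℝ)) →
      edgeProb (turanEdges n k) p (fun A => ¬ GoodCopy n k A) ≤
        Real.exp (-(c₁ * (n : ℝ) ^ 2 * p)) := by
  classical
  refine ⟨1 / (8 * ((2:ℝ) ^ (k + 2)) ^ k), by positivity, 2 ^ (k + 2), ?_⟩
  intro n hn p hplow hphigh
  set c₁ : ℝ := 1 / (8 * ((2:ℝ) ^ (k + 2)) ^ k) with hc₁
  set m : ℕ := n / 2 ^ (k + 1) with hmdef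
  set p0 : ℝ := (n : ℝ) ^ (-2 / ((k : ℝ) + 1)) with hp0def
  set K : ℕ := (ltPairs k).card with hKdef
  -- basic natural number facts
  have hpow_pos : 0 < 2 ^ (k + 1) := Nat.pow_pos (by norm_num)
  have hn2 : 2 ^ (k + 1) ≤ n := le_trans (Nat.pow_le_pow_right (by norm_num) (by omega)) hn
  have hn1 : 1 ≤ n := le_trans Nat.one_le_two_pow hn2
  have hm1 : 1 ≤ m := (Nat.one_le_div_iff hpow_pos).2 hn2
  have hkm : k * m ≤ n := by
    have h1 : k ≤ 2 ^ (k + 1) := le_trans (Nat.lt_two_pow_self (n := k)).le (Nat.pow_le_pow_right (by norm_num) (by omega))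
    have h2 : 2 ^ (k + 1) * m ≤ n := by
      rw [hmdef, mul_comm]
      exact Nat.div_mul_le_self n _
    exact le_trans (Nat.mul_le_mul_right m h1) h2
  have hn0 : (0 : ℝ) < (n : ℝ) := by exact_mod_cast hn1
  have hn1' : (1 : ℝ) ≤ (n : ℝ) := by exact_mod_cast hn1
  -- m bounds over ℝ
  have hm_le : (m : ℝ) ≤ (n : ℝ) / 2 ^ (k + 1) := by
    have := Nat.cast_div_le (m := n) (n := 2 ^ (k + 1)) (α := ℝ)
    rw [← hmdef] at this
    refine this.trans_eq ?_
    push_cast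
    ring
  have hm_ge_nat : n ≤ 2 ^ (k + 2) * m := by
    have hdm := Nat.div_add_mod n (2 ^ (k + 1))
    rw [← hmdef] at hdm
    have hr : n % 2 ^ (k + 1) < 2 ^ (k + 1) := Nat.mod_lt _ hpow_pos
    have hmul : 2 ^ (k + 1) ≤ 2 ^ (k + 1) * m := Nat.le_mul_of_pos_right _ hm1
    have hps : 2 ^ (k + 2) * m = 2 * (2 ^ (k + 1) * m) := by rw [pow_succ]; ring
    omega
  have hm_ge : (n : ℝ) / 2 ^ (k + 2) ≤ (m : ℝ) := by
    rw [div_le_iff₀ (by positivity)]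
    calc (n : ℝ) ≤ ((2 ^ (k + 2) * m : ℕ) : ℝ) := by exact_mod_cast hm_ge_nat
      _ = (m : ℝ) * 2 ^ (k + 2) := by push_cast; ring
  -- p0 and p facts
  have hp00 : 0 ≤ p0 := Real.rpow_nonneg hn0.le _
  have hexp_nonpos : -2 / ((k : ℝ) + 1) ≤ 0 := by
    have : (0:ℝ) < (k:ℝ) + 1 := by positivity
    rw [div_nonpos_iff]
    right
    constructor <;> linarith
  have hp01 : p0 ≤ 1 := Real.rpow_le_one_of_one_le_of_nonpos hn1' hexp_nonpos
  have hp0p : p0 ≤ p := hplow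
  have hquarter : p0 ≤ 1 / 4 := by
    have hx : (0:ℝ) < 2 / ((k : ℝ) + 1) := by positivity
    have hbase : ((2:ℝ) ^ (k + 1)) ≤ (n : ℝ) := by
      calc ((2:ℝ) ^ (k + 1)) = ((2 ^ (k + 1) : ℕ) : ℝ) := by push_cast; ring
        _ ≤ (n : ℝ) := by exact_mod_cast hn2
    have h4 : (4 : ℝ) ≤ (n : ℝ) ^ (2 / ((k : ℝ) + 1)) := by
      have h1 : ((2:ℝ) ^ (k + 1)) ^ (2 / ((k : ℝ) + 1)) ≤ (n : ℝ) ^ (2 / ((k : ℝ) + 1)) :=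
        Real.rpow_le_rpow (by positivity) hbase hx.le
      have h2 : ((2:ℝ) ^ (k + 1)) ^ (2 / ((k : ℝ) + 1)) = 4 := by
        rw [← Real.rpow_natCast (2:ℝ) (k + 1), ← Real.rpow_mul (by norm_num : (0:ℝ) ≤ 2)]
        have : ((k + 1 : ℕ) : ℝ) * (2 / ((k : ℝ) + 1)) = 2 := by
          push_cast
          field_simp
        rw [this]
        rw [show (2:ℝ) = ((2:ℕ):ℝ) by norm_num, Real.rpow_natCast]
        norm_num
      linarith
    have hneg : p0 = ((n : ℝ) ^ (2 / ((k : ℝ) + 1)))⁻¹ := by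
      rw [hp0def, ← Real.rpow_neg hn0.le]
      congr 1
      ring
    rw [hneg]
    rw [show (1:ℝ)/4 = 4⁻¹ by norm_num]
    exact inv_anti₀ (by norm_num) h4
  have hp1 : p ≤ 1 := by
    calc p ≤ 4 * p0 := hphigh
      _ ≤ 4 * (1/4) := by linarith
      _ = 1 := by norm_num
  -- the three probability steps
  have hdec : Dec (fun A : Finset (Sym2 (Fin n)) => ¬ GoodCopy n k A) :=
    fun A B hAB hB hA => hB (goodCopy_inc hAB hA)
  have step0 : edgeProb (turanEdges n k) p (fun A => ¬ GoodCopy n k A)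
      ≤ edgeProb (turanEdges n k) p0 (fun A => ¬ GoodCopy n k A) :=
    edgeProb_anti hp00 hp0p hp1 _ _ hdec
  set l : List (Fin k → Fin m) := (Finset.univ : Finset (Fin k → Fin m)).toList with hldef
  have step1 : edgeProb (turanEdges n k) p0 (fun A => ¬ GoodCopy n k A)
      ≤ edgeProb (turanEdges n k) p0 (NoneIn (copyEdges hkm) l) := by
    refine edgeProb_mono hp00 hp01 fun A _ hng => ?_
    intro j _ hsub
    exact hng (good_of_copy hkm j A hsub)
  have step2 := janson_chain p0 (copyEdges hkm) hp00 hp01 (copyEdges_subset hkm) l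
  have hlen : (l.length : ℝ) = (m : ℝ) ^ k := by
    rw [hldef, Finset.length_toList, Finset.card_univ, Fintype.card_fun]
    push_cast
    simp
  have step3 : ((m : ℝ) ^ k) * (p0 ^ K / 2) ≤ jExp p0 (copyEdges hkm) l := by
    have := jExp_ge hkm hn1 hm_le l (Finset.nodup_toList _)
    rwa [hlen] at this
  -- numeric comparison
  have h2K : 2 * K = k * (k - 1) := two_mul_card_ltPairs_univ k
  have h2K' : 2 * (K : ℝ) = (k : ℝ) * ((k : ℝ) - 1) := by
    have h3 : ((2 * K : ℕ) : ℝ) = ((k * (k - 1) : ℕ) : ℝ) := by rw [h2K]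
    push_cast [Nat.cast_sub (by omega : 1 ≤ k)] at h3
    linarith
  have hKr : (K : ℝ) = (k : ℝ) * ((k : ℝ) - 1) / 2 := by linarith
  have hk1ne : ((k : ℝ) + 1) ≠ 0 := by positivity
  have hZ2 : (n : ℝ) ^ (k : ℕ) * p0 ^ K = (n : ℝ) ^ ((2 * (k : ℝ)) / ((k : ℝ) + 1)) := by
    rw [hp0def, ← Real.rpow_natCast ((n:ℝ) ^ (-2 / ((k:ℝ)+1))) K, ← Real.rpow_mul hn0.le,
      ← Real.rpow_natCast (n : ℝ) k, ← Real.rpow_add hn0]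
    congr 1
    rw [hKr]
    field_simp
    ring
  have hZ1 : (n : ℝ) ^ 2 * p0 = (n : ℝ) ^ ((2 * (k : ℝ)) / ((k : ℝ) + 1)) := by
    rw [hp0def, show ((n:ℝ) ^ 2) = (n:ℝ) ^ ((2:ℕ) : ℝ) by rw [Real.rpow_natCast],
      ← Real.rpow_add hn0]
    congr 1
    push_cast
    field_simp
    ring
  have hmk : (n : ℝ) ^ (k : ℕ) / ((2:ℝ) ^ (k + 2)) ^ k ≤ (m : ℝ) ^ k := by
    calc (n : ℝ) ^ (k : ℕ) / ((2:ℝ) ^ (k + 2)) ^ k = ((n : ℝ) / 2 ^ (k + 2)) ^ k := by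
          rw [div_pow]
      _ ≤ (m : ℝ) ^ k := pow_le_pow_left₀ (by positivity) hm_ge k
  have step4 : c₁ * (n : ℝ) ^ 2 * p ≤ ((m : ℝ) ^ k) * (p0 ^ K / 2) := by
    have hp0Knn : (0:ℝ) ≤ p0 ^ K := pow_nonneg hp00 _
    have hc₁nn : (0:ℝ) ≤ c₁ := by positivity
    calc c₁ * (n : ℝ) ^ 2 * p ≤ c₁ * (n : ℝ) ^ 2 * (4 * p0) := by
          refine mul_le_mul_of_nonneg_left hphigh (by positivity)
      _ = 4 * c₁ * ((n : ℝ) ^ 2 * p0) := by ring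
      _ = 4 * c₁ * ((n : ℝ) ^ ((2 * (k : ℝ)) / ((k : ℝ) + 1))) := by rw [hZ1]
      _ = ((n : ℝ) ^ (k : ℕ) * p0 ^ K) / (2 * ((2:ℝ) ^ (k + 2)) ^ k) := by
          rw [hZ2, hc₁]
          field_simp
          ring
      _ = ((n : ℝ) ^ (k : ℕ) / ((2:ℝ) ^ (k + 2)) ^ k) * (p0 ^ K / 2) := by ring
      _ ≤ ((m : ℝ) ^ k) * (p0 ^ K / 2) := by
          refine mul_le_mul_of_nonneg_right hmk (by positivity)
  -- finish
  calc edgeProb (turanEdges n k) p (fun A => ¬ GoodCopy n k A)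
      ≤ edgeProb (turanEdges n k) p0 (fun A => ¬ GoodCopy n k A) := step0
    _ ≤ edgeProb (turanEdges n k) p0 (NoneIn (copyEdges hkm) l) := step1
    _ ≤ Real.exp (-(jExp p0 (copyEdges hkm) l)) := step2
    _ ≤ Real.exp (-(c₁ * (n : ℝ) ^ 2 * p)) := by
        rw [Real.exp_le_exp]
        have := le_trans step4 step3
        linarith

end Assemble

/-- Probability that `G(T_{n,k}, p)` has no good copy of `K_k` is at most
`exp(-c₁ n² p)` for `n^{-2/(k+1)} ≤ p ≤ 4 n^{-2/(k+1)}`. -/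
theorem no_good_copy_prob_binomial (k : ℕ) (hk : 3 ≤ k) :
    ∃ c₁ : ℝ, 0 < c₁ ∧ ∃ n₀ : ℕ, ∀ n : ℕ, n₀ ≤ n → ∀ p : ℝ,
      (n : ℝ) ^ (-2 / (k + 1 : ℝ)) ≤ p → p ≤ 4 * (n : ℝ) ^ (-2 / (k + 1 : ℝ)) →
      edgeProb (turanEdges n k) p (fun A => ¬ GoodCopy n k A) ≤
        Real.exp (-(c₁ * (n : ℝ) ^ 2 * p)) :=
  no_good_copy_prob_binomial' k hk

end TournamentGame
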